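/- For the single-qubit circuit C(θ₁, θ₂, θ₃) = R_Y(θ₃)R_Z(θ₂)R_X(θ₁)|0⟩, the Gram matrix G(θ) = J(θ)ᵀJ(θ) of the real Jacobian J(θ) (a 4 × 3 real matrix) satisfies det(G(θ)) = cos²(θ₂)/64. Hence the three parameters are independent (the map has rank 3) precisely when cos(θ₂) ≠ 0. -/

import Mathlib

open Matrix

/-- The single-qubit rotation gate `R_X(θ) = exp(−iθX/2)`. -/
noncomputable def RX (θ : ℝ) : Matrix (Fin 2) (Fin 2) ℂ :=
  !![(Real.cos (θ / 2) : ℂ), -Complex.I * Real.sin (θ / 2);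
     -Complex.I * Real.sin (θ / 2), (Real.cos (θ / 2) : ℂ)]

/-- The single-qubit rotation gate `R_Y(θ) = exp(−iθY/2)`. -/
noncomputable def RY (θ : ℝ) : Matrix (Fin 2) (Fin 2) ℂ :=
  !![(Real.cos (θ / 2) : ℂ), -(Real.sin (θ / 2) : ℂ);
     (Real.sin (θ / 2) : ℂ), (Real.cos (θ / 2) : ℂ)]

/-- The single-qubit rotation gate `R_Z(θ) = exp(−iθZ/2)`. -/
noncomputable def RZ (θ : ℝ) : Matrix (Fin 2) (Fin 2) ℂ :=
  !![Complex.exp (-Complex.I * θ / 2), 0; 0, Complex.exp (Complex.I * θ / 2)]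

/-- The circuit state `C(θ₁, θ₂, θ₃) = R_Y(θ₃) R_Z(θ₂) R_X(θ₁) |0⟩`. -/
noncomputable def C18 (θ₁ θ₂ θ₃ : ℝ) : Fin 2 → ℂ :=
  (RY θ₃ * RZ θ₂ * RX θ₁).mulVec ![1, 0]

/-- The real `4 × 3` Jacobian of `C`, stacking real and imaginary parts of the
partial derivatives `∂₁C`, `∂₂C`, `∂₃C` as columns. -/
noncomputable def J18 (θ₁ θ₂ θ₃ : ℝ) : Matrix (Fin 4) (Fin 3) ℝ :=
  Matrix.of fun i j =>
    let D : Fin 2 → ℂ :=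
      ![deriv (fun t => C18 t θ₂ θ₃) θ₁,
        deriv (fun t => C18 θ₁ t θ₃) θ₂,
        deriv (fun t => C18 θ₁ θ₂ t) θ₃] j
    ![(D 0).re, (D 1).re, (D 0).im, (D 1).im] i

lemma C18_eq (θ₁ θ₂ θ₃ : ℝ) :
    C18 θ₁ θ₂ θ₃ =
      ![(↑(Real.cos (θ₃/2) * Real.cos (θ₁/2) * Real.cos (θ₂/2)
            - Real.sin (θ₃/2) * Real.sin (θ₁/2) * Real.sin (θ₂/2)) : ℂ)
        + ↑(Real.sin (θ₃/2) * Real.sin (θ₁/2) * Real.cos (θ₂/2)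
            - Real.cos (θ₃/2) * Real.cos (θ₁/2) * Real.sin (θ₂/2)) * Complex.I,
        (↑(Real.sin (θ₃/2) * Real.cos (θ₁/2) * Real.cos (θ₂/2)
            + Real.cos (θ₃/2) * Real.sin (θ₁/2) * Real.sin (θ₂/2)) : ℂ)
        + ↑(-(Real.sin (θ₃/2) * Real.cos (θ₁/2) * Real.sin (θ₂/2))
            - Real.cos (θ₃/2) * Real.sin (θ₁/2) * Real.cos (θ₂/2)) * Complex.I] := by
  have e1 : Complex.exp (-(Complex.I * ↑θ₂) / 2)
      = Complex.cos (↑θ₂/2) - Complex.sin (↑θ₂/2) * Complex.I := by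
    rw [show (-(Complex.I * (θ₂:ℂ)) / 2 : ℂ) = (-((θ₂:ℂ)/2)) * Complex.I by ring,
      Complex.exp_mul_I, Complex.cos_neg, Complex.sin_neg]
    ring
  have e2 : Complex.exp (Complex.I * ↑θ₂ / 2)
      = Complex.cos (↑θ₂/2) + Complex.sin (↑θ₂/2) * Complex.I := by
    rw [show (Complex.I * (θ₂:ℂ) / 2 : ℂ) = ((θ₂:ℂ)/2) * Complex.I by ring,
      Complex.exp_mul_I]
  funext i
  fin_cases i <;>
  · simp [C18, RX, RY, RZ, Matrix.mulVec, Matrix.mul_apply, Fin.sum_univ_succ,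
      dotProduct]
    rw [e1, e2]
    ring_nf
    simp only [Complex.I_sq]
    ring

lemma hasDerivAt_aux (A B A' B' t : ℝ) :
    HasDerivAt (fun s : ℝ => ((A * Real.cos (s/2) + B * Real.sin (s/2) : ℝ) : ℂ)
        + ((A' * Real.cos (s/2) + B' * Real.sin (s/2) : ℝ) : ℂ) * Complex.I)
      (((B/2 * Real.cos (t/2) - A/2 * Real.sin (t/2) : ℝ) : ℂ)
        + ((B'/2 * Real.cos (t/2) - A'/2 * Real.sin (t/2) : ℝ) : ℂ) * Complex.I) t := by
  have hhalf : HasDerivAt (fun s : ℝ => s/2) (1/2) t := by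
    simpa using (hasDerivAt_id t).div_const 2
  have hc : HasDerivAt (fun s : ℝ => Real.cos (s/2)) (-Real.sin (t/2) * (1/2)) t :=
    by have := (Real.hasDerivAt_cos (t/2)).comp t hhalf; exact this
  have hs : HasDerivAt (fun s : ℝ => Real.sin (s/2)) (Real.cos (t/2) * (1/2)) t :=
    by have := (Real.hasDerivAt_sin (t/2)).comp t hhalf; exact this
  have h1 := ((hc.const_mul A).add (hs.const_mul B)).ofReal_comp (z := t)
  have h2 := (((hc.const_mul A').add (hs.const_mul B')).ofReal_comp (z := t)).mul_const Complex.I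
  exact (h1.add h2).congr_deriv (by
  push_cast
  ring)

lemma deriv1 (θ₁ θ₂ θ₃ : ℝ) :
    deriv (fun t => C18 t θ₂ θ₃) θ₁ =
      ![((-(Real.sin (θ₃/2) * Real.sin (θ₂/2))/2 * Real.cos (θ₁/2)
          - (Real.cos (θ₃/2) * Real.cos (θ₂/2))/2 * Real.sin (θ₁/2) : ℝ) : ℂ)
        + (((Real.sin (θ₃/2) * Real.cos (θ₂/2))/2 * Real.cos (θ₁/2)
          - (-(Real.cos (θ₃/2) * Real.sin (θ₂/2)))/2 * Real.sin (θ₁/2) : ℝ) : ℂ) * Complex.I,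
        (((Real.cos (θ₃/2) * Real.sin (θ₂/2))/2 * Real.cos (θ₁/2)
          - (Real.sin (θ₃/2) * Real.cos (θ₂/2))/2 * Real.sin (θ₁/2) : ℝ) : ℂ)
        + (((-(Real.cos (θ₃/2) * Real.cos (θ₂/2)))/2 * Real.cos (θ₁/2)
          - (-(Real.sin (θ₃/2) * Real.sin (θ₂/2)))/2 * Real.sin (θ₁/2) : ℝ) : ℂ) * Complex.I] := by
  have hfun : (fun t => C18 t θ₂ θ₃) = fun t =>
      ![((Real.cos (θ₃/2) * Real.cos (θ₂/2) * Real.cos (t/2)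
          + (-(Real.sin (θ₃/2) * Real.sin (θ₂/2))) * Real.sin (t/2) : ℝ) : ℂ)
        + (((-(Real.cos (θ₃/2) * Real.sin (θ₂/2))) * Real.cos (t/2)
          + Real.sin (θ₃/2) * Real.cos (θ₂/2) * Real.sin (t/2) : ℝ) : ℂ) * Complex.I,
        ((Real.sin (θ₃/2) * Real.cos (θ₂/2) * Real.cos (t/2)
          + Real.cos (θ₃/2) * Real.sin (θ₂/2) * Real.sin (t/2) : ℝ) : ℂ)
        + (((-(Real.sin (θ₃/2) * Real.sin (θ₂/2))) * Real.cos (t/2)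
          + (-(Real.cos (θ₃/2) * Real.cos (θ₂/2))) * Real.sin (t/2) : ℝ) : ℂ) * Complex.I] := by
    funext t
    rw [C18_eq]
    funext i
    fin_cases i <;> · simp; push_cast; ring
  rw [hfun]
  apply HasDerivAt.deriv
  apply hasDerivAt_pi.2
  intro i
  fin_cases i
  · exact hasDerivAt_aux _ _ _ _ θ₁
  · exact hasDerivAt_aux _ _ _ _ θ₁

lemma deriv2 (θ₁ θ₂ θ₃ : ℝ) :
    deriv (fun t => C18 θ₁ t θ₃) θ₂ =
      ![((-(Real.sin (θ₃/2) * Real.sin (θ₁/2))/2 * Real.cos (θ₂/2)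
          - (Real.cos (θ₃/2) * Real.cos (θ₁/2))/2 * Real.sin (θ₂/2) : ℝ) : ℂ)
        + (((-(Real.cos (θ₃/2) * Real.cos (θ₁/2)))/2 * Real.cos (θ₂/2)
          - (Real.sin (θ₃/2) * Real.sin (θ₁/2))/2 * Real.sin (θ₂/2) : ℝ) : ℂ) * Complex.I,
        (((Real.cos (θ₃/2) * Real.sin (θ₁/2))/2 * Real.cos (θ₂/2)
          - (Real.sin (θ₃/2) * Real.cos (θ₁/2))/2 * Real.sin (θ₂/2) : ℝ) : ℂ)
        + (((-(Real.sin (θ₃/2) * Real.cos (θ₁/2)))/2 * Real.cos (θ₂/2)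
          - (-(Real.cos (θ₃/2) * Real.sin (θ₁/2)))/2 * Real.sin (θ₂/2) : ℝ) : ℂ) * Complex.I] := by
  have hfun : (fun t => C18 θ₁ t θ₃) = fun t =>
      ![((Real.cos (θ₃/2) * Real.cos (θ₁/2) * Real.cos (t/2)
          + (-(Real.sin (θ₃/2) * Real.sin (θ₁/2))) * Real.sin (t/2) : ℝ) : ℂ)
        + ((Real.sin (θ₃/2) * Real.sin (θ₁/2) * Real.cos (t/2)
          + (-(Real.cos (θ₃/2) * Real.cos (θ₁/2))) * Real.sin (t/2) : ℝ) : ℂ) * Complex.I,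
        ((Real.sin (θ₃/2) * Real.cos (θ₁/2) * Real.cos (t/2)
          + Real.cos (θ₃/2) * Real.sin (θ₁/2) * Real.sin (t/2) : ℝ) : ℂ)
        + (((-(Real.cos (θ₃/2) * Real.sin (θ₁/2))) * Real.cos (t/2)
          + (-(Real.sin (θ₃/2) * Real.cos (θ₁/2))) * Real.sin (t/2) : ℝ) : ℂ) * Complex.I] := by
    funext t
    rw [C18_eq]
    funext i
    fin_cases i <;> · simp; push_cast; ring
  rw [hfun]
  apply HasDerivAt.deriv
  apply hasDerivAt_pi.2
  intro i
  fin_cases i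
  · exact hasDerivAt_aux _ _ _ _ θ₂
  · exact hasDerivAt_aux _ _ _ _ θ₂

lemma deriv3 (θ₁ θ₂ θ₃ : ℝ) :
    deriv (fun t => C18 θ₁ θ₂ t) θ₃ =
      ![((-(Real.sin (θ₁/2) * Real.sin (θ₂/2))/2 * Real.cos (θ₃/2)
          - (Real.cos (θ₁/2) * Real.cos (θ₂/2))/2 * Real.sin (θ₃/2) : ℝ) : ℂ)
        + (((Real.sin (θ₁/2) * Real.cos (θ₂/2))/2 * Real.cos (θ₃/2)
          - (-(Real.cos (θ₁/2) * Real.sin (θ₂/2)))/2 * Real.sin (θ₃/2) : ℝ) : ℂ) * Complex.I,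
        (((Real.cos (θ₁/2) * Real.cos (θ₂/2))/2 * Real.cos (θ₃/2)
          - (Real.sin (θ₁/2) * Real.sin (θ₂/2))/2 * Real.sin (θ₃/2) : ℝ) : ℂ)
        + (((-(Real.cos (θ₁/2) * Real.sin (θ₂/2)))/2 * Real.cos (θ₃/2)
          - (-(Real.sin (θ₁/2) * Real.cos (θ₂/2)))/2 * Real.sin (θ₃/2) : ℝ) : ℂ) * Complex.I] := by
  have hfun : (fun t => C18 θ₁ θ₂ t) = fun t =>
      ![((Real.cos (θ₁/2) * Real.cos (θ₂/2) * Real.cos (t/2)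
          + (-(Real.sin (θ₁/2) * Real.sin (θ₂/2))) * Real.sin (t/2) : ℝ) : ℂ)
        + (((-(Real.cos (θ₁/2) * Real.sin (θ₂/2))) * Real.cos (t/2)
          + Real.sin (θ₁/2) * Real.cos (θ₂/2) * Real.sin (t/2) : ℝ) : ℂ) * Complex.I,
        ((Real.sin (θ₁/2) * Real.sin (θ₂/2) * Real.cos (t/2)
          + Real.cos (θ₁/2) * Real.cos (θ₂/2) * Real.sin (t/2) : ℝ) : ℂ)
        + (((-(Real.sin (θ₁/2) * Real.cos (θ₂/2))) * Real.cos (t/2)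
          + (-(Real.cos (θ₁/2) * Real.sin (θ₂/2))) * Real.sin (t/2) : ℝ) : ℂ) * Complex.I] := by
    funext t
    rw [C18_eq]
    funext i
    fin_cases i <;> · simp; push_cast; ring
  rw [hfun]
  apply HasDerivAt.deriv
  apply hasDerivAt_pi.2
  intro i
  fin_cases i
  · exact hasDerivAt_aux _ _ _ _ θ₃
  · exact hasDerivAt_aux _ _ _ _ θ₃

noncomputable def Mmat (sa ca sb cb sc cc : ℝ) : Matrix (Fin 4) (Fin 3) ℝ :=
  !![-(sc*sb)/2*ca - (cc*cb)/2*sa, -(sc*sa)/2*cb - (cc*ca)/2*sb, -(sa*sb)/2*cc - (ca*cb)/2*sc;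
     (cc*sb)/2*ca - (sc*cb)/2*sa, (cc*sa)/2*cb - (sc*ca)/2*sb, (ca*cb)/2*cc - (sa*sb)/2*sc;
     (sc*cb)/2*ca - (-(cc*sb))/2*sa, (-(cc*ca))/2*cb - (sc*sa)/2*sb, (sa*cb)/2*cc - (-(ca*sb))/2*sc;
     (-(cc*cb))/2*ca - (-(sc*sb))/2*sa, (-(sc*ca))/2*cb - (-(cc*sa))/2*sb,
       (-(ca*sb))/2*cc - (-(sa*cb))/2*sc]

set_option maxHeartbeats 1000000 in
lemma gram_aux (sa ca sb cb sc cc : ℝ) (ha : sa^2 + ca^2 = 1) (hb : sb^2 + cb^2 = 1)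
    (hc : sc^2 + cc^2 = 1) :
    (Mmat sa ca sb cb sc cc)ᵀ * Mmat sa ca sb cb sc cc =
      !![(1:ℝ)/4, 0, sb*cb/2; 0, 1/4, 0; sb*cb/2, 0, 1/4] := by
  ext i j
  fin_cases i <;> fin_cases j <;>
    simp [Mmat, Matrix.mul_apply, Fin.sum_univ_succ]
  · linear_combination ((1/4)*cb*cb*cc*cc + (1/4)*cb*cb*sc*sc + (1/4)*sb*sb*cc*cc
      + (1/4)*sb*sb*sc*sc)*ha + ((1/4)*cc*cc + (1/4)*sc*sc)*hb + (1/4)*hc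
  · ring
  · linear_combination ((1/2)*sb*cb*cc*cc + (1/2)*sb*cb*sc*sc)*ha + ((1/2)*sb*cb)*hc
  · ring
  · linear_combination ((1/4)*cb*cb*cc*cc + (1/4)*cb*cb*sc*sc + (1/4)*sb*sb*cc*cc
      + (1/4)*sb*sb*sc*sc)*ha + ((1/4)*cc*cc + (1/4)*sc*sc)*hb + (1/4)*hc
  · ring
  · linear_combination ((1/2)*sb*cb*cc*cc + (1/2)*sb*cb*sc*sc)*ha + ((1/2)*sb*cb)*hc
  · ring
  · linear_combination ((1/4)*cb*cb*cc*cc + (1/4)*cb*cb*sc*sc + (1/4)*sb*sb*cc*cc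
      + (1/4)*sb*sb*sc*sc)*ha + ((1/4)*cc*cc + (1/4)*sc*sc)*hb + (1/4)*hc

lemma rank_eq_three_iff_det_ne_zero (A : Matrix (Fin 3) (Fin 3) ℝ) :
    A.rank = 3 ↔ A.det ≠ 0 := by
  constructor
  · intro h hdet
    obtain ⟨v, hv, hv0⟩ := Matrix.exists_mulVec_eq_zero_iff.2 hdet
    have hker : v ∈ LinearMap.ker A.mulVecLin := by
      simpa [Matrix.mulVecLin_apply] using hv0
    have hne : LinearMap.ker A.mulVecLin ≠ ⊥ := by
      intro hbot
      exact hv (by simpa [hbot] using hker)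
    have hpos : 0 < Module.finrank ℝ (LinearMap.ker A.mulVecLin) := by
      rcases Nat.eq_zero_or_pos (Module.finrank ℝ (LinearMap.ker A.mulVecLin)) with h0 | h0
      · exact absurd (Submodule.finrank_eq_zero.1 h0) hne
      · exact h0
    have hrn := LinearMap.finrank_range_add_finrank_ker A.mulVecLin
    rw [Module.finrank_fintype_fun_eq_card] at hrn
    have hrank : A.rank = Module.finrank ℝ (LinearMap.range A.mulVecLin) := rfl
    simp [Fintype.card_fin] at hrn
    omega
  · intro hdet
    have hu : IsUnit A := (Matrix.isUnit_iff_isUnit_det A).2 (isUnit_iff_ne_zero.2 hdet)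
    simpa using Matrix.rank_of_isUnit A hu

set_option maxHeartbeats 1000000 in
/-- For `C(θ₁,θ₂,θ₃) = R_Y(θ₃)R_Z(θ₂)R_X(θ₁)|0⟩`, the Gram matrix
`G(θ) = J(θ)ᵀJ(θ)` of the real Jacobian satisfies `det G(θ) = cos²(θ₂)/64`;
hence the three parameters are independent (`rank J(θ) = 3`) precisely when
`cos θ₂ ≠ 0`. -/
theorem gram_det_RYRZRX :
    ∀ θ₁ θ₂ θ₃ : ℝ,
      ((J18 θ₁ θ₂ θ₃)ᵀ * J18 θ₁ θ₂ θ₃).det = Real.cos θ₂ ^ 2 / 64 ∧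
      ((J18 θ₁ θ₂ θ₃).rank = 3 ↔ Real.cos θ₂ ≠ 0) := by
  intro θ₁ θ₂ θ₃
  have ha := Real.sin_sq_add_cos_sq (θ₁/2)
  have hb := Real.sin_sq_add_cos_sq (θ₂/2)
  have hc := Real.sin_sq_add_cos_sq (θ₃/2)
  have hs2 : Real.sin θ₂ / 4 = Real.sin (θ₂/2) * Real.cos (θ₂/2) / 2 := by
    have h := Real.sin_two_mul (θ₂/2)
    rw [show 2*(θ₂/2) = θ₂ by ring] at h
    rw [h]; ring
  have e1 : ((θ₁:ℂ)/2) = ((θ₁/2 : ℝ) : ℂ) := by push_cast; ring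
  have e2 : ((θ₂:ℂ)/2) = ((θ₂/2 : ℝ) : ℂ) := by push_cast; ring
  have e3 : ((θ₃:ℂ)/2) = ((θ₃/2 : ℝ) : ℂ) := by push_cast; ring
  have hJ : J18 θ₁ θ₂ θ₃ = Mmat (Real.sin (θ₁/2)) (Real.cos (θ₁/2)) (Real.sin (θ₂/2))
      (Real.cos (θ₂/2)) (Real.sin (θ₃/2)) (Real.cos (θ₃/2)) := by
    unfold J18
    simp only [deriv1, deriv2, deriv3]
    ext i j
    fin_cases i <;> fin_cases j <;>
      simp [Mmat, Complex.add_re, Complex.add_im, Complex.mul_I_re, Complex.mul_I_im,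
        e1, e2, e3, ← Complex.ofReal_sin, ← Complex.ofReal_cos,
        Complex.ofReal_re, Complex.ofReal_im]
  have hG : (J18 θ₁ θ₂ θ₃)ᵀ * J18 θ₁ θ₂ θ₃ =
      !![(1:ℝ)/4, 0, Real.sin θ₂/4; 0, 1/4, 0; Real.sin θ₂/4, 0, 1/4] := by
    rw [hJ, gram_aux _ _ _ _ _ _ ha hb hc, hs2]
  have hdet : ((J18 θ₁ θ₂ θ₃)ᵀ * J18 θ₁ θ₂ θ₃).det = Real.cos θ₂ ^ 2 / 64 := by
    rw [hG, Matrix.det_fin_three]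
    simp
    linear_combination (-(1:ℝ)/64) * Real.sin_sq_add_cos_sq θ₂
  refine ⟨hdet, ?_⟩
  have hr : (J18 θ₁ θ₂ θ₃).rank = ((J18 θ₁ θ₂ θ₃)ᵀ * J18 θ₁ θ₂ θ₃).rank :=
    (Matrix.rank_transpose_mul_self _).symm
  rw [hr, rank_eq_three_iff_det_ne_zero, hdet]
  constructor
  · intro h hcos
    exact h (by rw [hcos]; norm_num)
  · intro h hzero
    apply h
    have h2 : Real.cos θ₂ ^ 2 = 0 := by linarith
    exact pow_eq_zero_iff (by norm_num) |>.1 h2
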